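/- Let H be a complex Hilbert space, x ∈ H a unit vector, and for each n ≥ 1 let C_n = { (m : ℂ) • x | m ∈ ℕ, m ≥ n } ⊆ H. Then: each C_n is a closed subset of H; ⋂_{n≥1} C_n = ∅; (⋂_{n≥1} C_n)^⊥⊥ = {0}; and C_n^⊥⊥ = { λ • x | λ ∈ ℂ } for every n ≥ 1. In particular ⋂_{n≥1} (C_n^⊥⊥) ≠ (⋂_{n≥1} C_n)^⊥⊥, so biorthogonalization does not preserve intersections of decreasing sequences of closed sets, i.e. it is not Scott continuous. -/

import Mathlib

open scoped InnerProductSpace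

noncomputable section

variable {H : Type*} [NormedAddCommGroup H] [InnerProductSpace ℂ H] [CompleteSpace H]

/-- The orthogonal set of a subset `S` of `H`. -/
def orthoSet (S : Set H) : Set H := {y | ∀ z ∈ S, ⟪z, y⟫_ℂ = 0}

/-- `Cn x n = { m • x | m : ℕ, m ≥ n }`. -/
def Cn (x : H) (n : ℕ) : Set H := {y | ∃ m : ℕ, n ≤ m ∧ y = (m : ℂ) • x}

lemma orthoSet_Cn (x : H) (n : ℕ) (hn : 1 ≤ n) :
    orthoSet (Cn x n) = {y | ⟪x, y⟫_ℂ = 0} := by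
  ext y
  constructor
  · intro hy
    have h := hy ((n : ℂ) • x) ⟨n, le_rfl, rfl⟩
    rw [inner_smul_left] at h
    have hn0 : (starRingEnd ℂ) (n : ℂ) ≠ 0 := by
      simp only [map_natCast, Ne, Nat.cast_eq_zero]
      omega
    exact (mul_eq_zero.mp h).resolve_left hn0
  · rintro hy z ⟨m, _, rfl⟩
    rw [inner_smul_left, hy, mul_zero]

lemma biortho_line (x : H) (hx : ‖x‖ = 1) (n : ℕ) (hn : 1 ≤ n) :
    orthoSet (orthoSet (Cn x n)) = {y | ∃ l : ℂ, y = l • x} := by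
  rw [orthoSet_Cn x n hn]
  ext y
  constructor
  · intro hy
    refine ⟨⟪x, y⟫_ℂ, ?_⟩
    set w := y - ⟪x, y⟫_ℂ • x with hw
    have hxx : ⟪x, x⟫_ℂ = 1 := by
      rw [inner_self_eq_norm_sq_to_K, hx]; norm_num
    have hxw : ⟪x, w⟫_ℂ = 0 := by
      rw [hw, inner_sub_right, inner_smul_right, hxx, mul_one, sub_self]
    have hwy : ⟪w, y⟫_ℂ = 0 := hy w hxw
    have hwx : ⟪w, x⟫_ℂ = 0 := by
      rw [← inner_conj_symm, hxw, map_zero]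
    have hww : ⟪w, w⟫_ℂ = 0 := by
      rw [hw, inner_sub_right, hwy, inner_smul_right, ← hw, hwx, mul_zero, sub_self]
    have hw0 : w = 0 := inner_self_eq_zero.mp hww
    have : y - ⟪x, y⟫_ℂ • x = 0 := hw0
    exact sub_eq_zero.mp this
  · rintro ⟨l, rfl⟩ z hz
    rw [inner_smul_right, inner_eq_zero_symm.mp hz, mul_zero]

theorem biorthogonalization_not_scott_continuous (x : H) (hx : ‖x‖ = 1) :
    (∀ n, 1 ≤ n → IsClosed (Cn x n)) ∧
    (⋂ n ∈ {n : ℕ | 1 ≤ n}, Cn x n) = ∅ ∧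
    orthoSet (orthoSet (⋂ n ∈ {n : ℕ | 1 ≤ n}, Cn x n)) = {0} ∧
    (∀ n, 1 ≤ n → orthoSet (orthoSet (Cn x n)) = {y | ∃ l : ℂ, y = l • x}) ∧
    (⋂ n ∈ {n : ℕ | 1 ≤ n}, orthoSet (orthoSet (Cn x n)))
      ≠ orthoSet (orthoSet (⋂ n ∈ {n : ℕ | 1 ≤ n}, Cn x n)) := by
  have hx0 : x ≠ 0 := by
    intro h; rw [h, norm_zero] at hx; norm_num at hx
  -- empty intersection
  have hempty : (⋂ n ∈ {n : ℕ | 1 ≤ n}, Cn x n) = ∅ := by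
    ext y
    simp only [Set.mem_iInter, Set.mem_empty_iff_false, iff_false, Set.mem_setOf_eq]
    intro hy
    obtain ⟨m, _, rfl⟩ := hy 1 le_rfl
    obtain ⟨m', hm', he⟩ := hy (m + 1) (by omega)
    have : (m : ℂ) = (m' : ℂ) := smul_left_injective ℂ hx0 he
    have : m = m' := by exact_mod_cast this
    omega
  -- closedness
  have hclosed : ∀ n, 1 ≤ n → IsClosed (Cn x n) := by
    intro n _
    have hiso : Isometry (fun r : ℝ => (r : ℂ) • x) := by
      apply Isometry.of_dist_eq
      intro a b
      rw [dist_eq_norm, dist_eq_norm, ← sub_smul, norm_smul, hx, mul_one,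
        ← Complex.ofReal_sub]
      rw [Complex.norm_real]
    have hset : Cn x n = (fun r : ℝ => (r : ℂ) • x) ''
        ((Nat.cast : ℕ → ℝ) '' {m | n ≤ m}) := by
      ext y
      simp only [Set.mem_image, Set.mem_setOf_eq, Cn]
      constructor
      · rintro ⟨m, hm, rfl⟩
        exact ⟨(m : ℝ), ⟨m, hm, rfl⟩, by push_cast; ring_nf⟩
      · rintro ⟨r, ⟨m, hm, rfl⟩, rfl⟩
        exact ⟨m, hm, by push_cast; ring_nf⟩
    rw [hset]
    exact hiso.isClosedEmbedding.isClosedMap _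
      (Nat.isClosedEmbedding_coe_real.isClosedMap _ (isClosed_discrete _))
  -- biorthogonal of empty set
  have hbi0 : orthoSet (orthoSet (⋂ n ∈ {n : ℕ | 1 ≤ n}, Cn x n)) = {0} := by
    rw [hempty]
    have h1 : orthoSet (∅ : Set H) = Set.univ := by
      ext y; simp [orthoSet]
    rw [h1]
    ext y
    simp only [orthoSet, Set.mem_setOf_eq, Set.mem_singleton_iff]
    constructor
    · intro hy
      have := hy y (Set.mem_univ y)
      exact inner_self_eq_zero.mp this
    · rintro rfl z _; exact inner_zero_right z
  refine ⟨hclosed, hempty, hbi0, fun n hn => biortho_line x hx n hn, ?_⟩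
  intro h
  have hxmem : x ∈ ⋂ n ∈ {n : ℕ | 1 ≤ n}, orthoSet (orthoSet (Cn x n)) := by
    simp only [Set.mem_iInter, Set.mem_setOf_eq]
    intro n hn
    rw [biortho_line x hx n hn]
    exact ⟨1, (one_smul _ _).symm⟩
  rw [h, hbi0] at hxmem
  exact hx0 hxmem
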